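/- Let G be a finite simple graph, let d ≥ 1 and t ≥ 1 be integers, and let H(G,d,t) be the associated constructed hypergraph. For every maximal independent set I of G, the set F consisting of all vertices of V(G) ∖ I together with all vertices (S,a) with S ⊆ I, |S| = d, and 1 ≤ a ≤ t, is a minimal hitting set of H(G,d,t) of cardinality |V(G)| − |I| + t·C(|I|,d), where C(|I|,d) denotes the binomial coefficient. -/
import Mathlib


/-- `F` is a hitting set of the hypergraph with hyperedge family `E'`:
it intersects every hyperedge. -/
def HittingSet {W : Type*} (E' : Set (Set W)) (F : Set W) : Prop :=
  ∀ e ∈ E', (F ∩ e).Nonempty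

/-- `F` is a minimal hitting set: it is a hitting set and no proper subset of it is. -/
def MinimalHittingSet {W : Type*} (E' : Set (Set W)) (F : Set W) : Prop :=
  HittingSet E' F ∧ ∀ F' : Set W, F' ⊂ F → ¬ HittingSet E' F'

/-- `I` is an independent set of `G` (as a `Finset`): no two of its vertices are adjacent. -/
def FinIndep {V : Type*} (G : SimpleGraph V) (I : Finset V) : Prop :=
  ∀ u ∈ I, ∀ v ∈ I, ¬ G.Adj u v

/-- The vertex set of the hypergraph `H(G,d,t)`: the vertices of `G` together with the
pairs `(S, a)` where `S ⊆ V(G)` has `|S| = d` and `1 ≤ a ≤ t`. -/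
abbrev HVert (V : Type*) (d t : ℕ) : Type _ :=
  V ⊕ ({S : Finset V // S.card = d} × Fin t)

/-- The hyperedges of `H(G,d,t)`: the set `{u, v}` for every edge `uv` of `G`, and the
set `S ∪ {(S, a)}` for every `d`-element subset `S` of `V(G)` and every `1 ≤ a ≤ t`. -/
def hEdges {V : Type*} (G : SimpleGraph V) (d t : ℕ) : Set (Set (HVert V d t)) :=
  {e | (∃ u v : V, G.Adj u v ∧ e = {Sum.inl u, Sum.inl v}) ∨
       (∃ (S : {S : Finset V // S.card = d}) (a : Fin t),
          e = Sum.inl '' (↑S.1 : Set V) ∪ {Sum.inr (S, a)})}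

theorem stmt13 {V : Type*} [Fintype V] [DecidableEq V] (G : SimpleGraph V)
    (d t : ℕ) (hd : 1 ≤ d) (ht : 1 ≤ t) (I : Finset V)
    (hI : FinIndep G I) (hmax : ∀ J : Finset V, FinIndep G J → I ⊆ J → J = I) :
    MinimalHittingSet (hEdges G d t)
        ({x | (∃ u : V, u ∉ I ∧ x = Sum.inl u) ∨
           ∃ (S : {S : Finset V // S.card = d}) (a : Fin t),
             S.1 ⊆ I ∧ x = Sum.inr (S, a)} : Set (HVert V d t)) ∧
      ({x | (∃ u : V, u ∉ I ∧ x = Sum.inl u) ∨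
           ∃ (S : {S : Finset V // S.card = d}) (a : Fin t),
             S.1 ⊆ I ∧ x = Sum.inr (S, a)} : Set (HVert V d t)).ncard =
        Fintype.card V - I.card + t * (I.card).choose d := by
  classical
  set F : Set (HVert V d t) :=
    {x | (∃ u : V, u ∉ I ∧ x = Sum.inl u) ∨
       ∃ (S : {S : Finset V // S.card = d}) (a : Fin t),
         S.1 ⊆ I ∧ x = Sum.inr (S, a)} with hF
  have hFinl : ∀ u : V, Sum.inl u ∈ F ↔ u ∉ I := by
    intro u
    simp only [hF, Set.mem_setOf_eq]
    constructor
    · rintro (⟨u', hu', h⟩ | ⟨S, a, _, h⟩)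
      · cases h; exact hu'
      · exact absurd h (by simp)
    · intro hu; exact Or.inl ⟨u, hu, rfl⟩
  have hFinr : ∀ (S : {S : Finset V // S.card = d}) (a : Fin t),
      Sum.inr (S, a) ∈ F ↔ S.1 ⊆ I := by
    intro S a
    simp only [hF, Set.mem_setOf_eq]
    constructor
    · rintro (⟨u', hu', h⟩ | ⟨S', a', hS', h⟩)
      · exact absurd h (by simp)
      · have h' := Sum.inr.inj h
        have hS : S = S' := congrArg Prod.fst h'
        rw [hS]; exact hS'
    · intro h; exact Or.inr ⟨S, a, h, rfl⟩
  have hhit : HittingSet (hEdges G d t) F := by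
    rintro e (⟨u, v, huv, rfl⟩ | ⟨S, a, rfl⟩)
    · by_cases hu : u ∈ I
      · have hv : v ∉ I := fun hv => hI u hu v hv huv
        exact ⟨Sum.inl v, (hFinl v).2 hv, by simp⟩
      · exact ⟨Sum.inl u, (hFinl u).2 hu, by simp⟩
    · by_cases hS : S.1 ⊆ I
      · exact ⟨Sum.inr (S, a), (hFinr S a).2 hS, by simp⟩
      · obtain ⟨s, hs, hsI⟩ := Finset.not_subset.1 hS
        exact ⟨Sum.inl s, (hFinl s).2 hsI, Or.inl ⟨s, by simpa using hs, rfl⟩⟩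
  refine ⟨⟨hhit, ?_⟩, ?_⟩
  · intro F' hF' hhit'
    obtain ⟨x, hxF, hxF'⟩ := Set.exists_of_ssubset hF'
    have hsub := hF'.1
    rcases hxF with ⟨u, hu, rfl⟩ | ⟨S, a, hSI, rfl⟩
    · -- u ∉ I; find v ∈ I adjacent to u
      have hnind : ¬ FinIndep G (insert u I) := by
        intro hind
        have := hmax (insert u I) hind (Finset.subset_insert u I)
        exact hu (this ▸ Finset.mem_insert_self u I)
      have hadj : ∃ v ∈ I, G.Adj u v := by
        by_contra hc
        push_neg at hc
        apply hnind
        intro a ha b hb hab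
        rcases Finset.mem_insert.1 ha with ha1 | ha1 <;>
          rcases Finset.mem_insert.1 hb with hb1 | hb1
        · rw [ha1, hb1] at hab; exact G.irrefl hab
        · rw [ha1] at hab; exact hc b hb1 hab
        · rw [hb1] at hab; exact hc a ha1 hab.symm
        · exact hI a ha1 b hb1 hab
      obtain ⟨v, hv, huv⟩ := hadj
      obtain ⟨y, hyF', hye⟩ := hhit' {Sum.inl u, Sum.inl v} (Or.inl ⟨u, v, huv, rfl⟩)
      rcases hye with rfl | rfl
      · exact hxF' hyF'
      · exact ((hFinl v).1 (hsub hyF')) hv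
    · obtain ⟨y, hyF', hye⟩ := hhit' (Sum.inl '' (↑S.1 : Set V) ∪ {Sum.inr (S, a)})
        (Or.inr ⟨S, a, rfl⟩)
      rcases hye with ⟨s, hs, rfl⟩ | hy
      · exact ((hFinl s).1 (hsub hyF')) (hSI (by simpa using hs))
      · rw [Set.mem_singleton_iff] at hy
        subst hy
        exact hxF' hyF'
  · -- cardinality
    have hFeq : F = ↑((Iᶜ.image Sum.inl ∪
        (Finset.univ.filter fun p : {S : Finset V // S.card = d} × Fin t => p.1.1 ⊆ I).image
          Sum.inr : Finset (HVert V d t))) := by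
      ext x
      cases x with
      | inl u => simp [hFinl u]
      | inr p => simpa using hFinr p.1 p.2
    rw [hFeq, Set.ncard_coe_finset]
    rw [Finset.card_union_of_disjoint (by
      simp [Finset.disjoint_left])]
    rw [Finset.card_image_of_injective _ Sum.inl_injective,
      Finset.card_image_of_injective _ Sum.inr_injective,
      Finset.card_compl]
    congr 1
    have himg : (Finset.univ.filter fun p : {S : Finset V // S.card = d} × Fin t => p.1.1 ⊆ I)
        = ((Finset.univ.filter fun S : {S : Finset V // S.card = d} => S.1 ⊆ I) ×ˢ
            (Finset.univ : Finset (Fin t))) := by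
      ext p; simp
    rw [himg, Finset.card_product, Finset.card_univ, Fintype.card_fin]
    have himg2 : (Finset.univ.filter fun S : {S : Finset V // S.card = d} => S.1 ⊆ I).image
        Subtype.val = I.powersetCard d := by
      ext S
      simp only [Finset.mem_image, Finset.mem_filter, Finset.mem_univ, true_and,
        Finset.mem_powersetCard]
      constructor
      · rintro ⟨⟨S', hS'⟩, h, rfl⟩; exact ⟨h, hS'⟩
      · rintro ⟨h1, h2⟩; exact ⟨⟨S, h2⟩, h1, rfl⟩
    have := congrArg Finset.card himg2
    rw [Finset.card_image_of_injective _ Subtype.val_injective, Finset.card_powersetCard] at this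
    rw [this, mul_comm]
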